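/- Consider n balls thrown independently and uniformly at random into m bins, where n = k·m with k ≥ 1 and m ≥ 2, and let p = 1/m. Let B_i be the number of balls in bin i and X = ∑_{i=1}^{m} max(B_i − k, 0). Then Var(X) ≤ m·Var(B_1) = n(1−p). -/

import Mathlib

open Finset

/-- Number of balls landing in bin `i` when the throw outcome is `ω`
(ball `j` lands in bin `ω j`). -/
def binCount (n m : ℕ) (i : Fin m) (ω : Fin n → Fin m) : ℕ :=
  (Finset.univ.filter fun j => ω j = i).card

/-- The total overflow: number of balls exceeding the capacity `k` of their bin. -/
noncomputable def overflowX (n m k : ℕ) (ω : Fin n → Fin m) : ℝ :=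
  ∑ i : Fin m, max ((binCount n m i ω : ℝ) - (k : ℝ)) 0

/-- Expectation of a real-valued random variable on the uniform space of
functions `Fin n → Fin m` (balls-into-bins model). -/
noncomputable def expec (n m : ℕ) (f : (Fin n → Fin m) → ℝ) : ℝ :=
  (∑ ω : Fin n → Fin m, f ω) / (Fintype.card (Fin n → Fin m) : ℝ)

/-- Variance of a real-valued random variable on the uniform space of
functions `Fin n → Fin m`. -/
noncomputable def variance' (n m : ℕ) (f : (Fin n → Fin m) → ℝ) : ℝ :=
  expec n m (fun ω => (f ω - expec n m f) ^ 2)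

namespace VarSpare
variable {n m : ℕ}

def swapUpdate (j : Fin n) : ((Fin n → Fin m) × Fin m) ≃ ((Fin n → Fin m) × Fin m) where
  toFun p := (Function.update p.1 j p.2, p.1 j)
  invFun p := (Function.update p.1 j p.2, p.1 j)
  left_inv p := by simp [Function.update_idem, Function.update_eq_self]
  right_inv p := by simp [Function.update_idem, Function.update_eq_self]

lemma L1 (j : Fin n) (h : (Fin n → Fin m) → ℝ) :
    ∑ ω : Fin n → Fin m, ∑ a : Fin m, h (Function.update ω j a)
      = (m : ℝ) * ∑ ω : Fin n → Fin m, h ω := by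
  have key := Equiv.sum_comp (swapUpdate (m := m) j) (fun p => h p.1)
  rw [Fintype.sum_prod_type] at key
  calc ∑ ω : Fin n → Fin m, ∑ a : Fin m, h (Function.update ω j a)
      = ∑ x : Fin n → Fin m, ∑ y : Fin m, h ((swapUpdate (m := m) j) (x, y)).1 := rfl
    _ = ∑ p : (Fin n → Fin m) × Fin m, h p.1 := key
    _ = (m : ℝ) * ∑ ω : Fin n → Fin m, h ω := by
        rw [Fintype.sum_prod_type]
        simp [Finset.sum_const]
        rw [← Finset.mul_sum]

def merge (j : ℕ) (ω τ : Fin n → Fin m) : Fin n → Fin m :=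
  fun i => if (i : ℕ) < j then ω i else τ i

noncomputable def G (f : (Fin n → Fin m) → ℝ) (j : ℕ) (ω : Fin n → Fin m) : ℝ :=
  ∑ τ : Fin n → Fin m, f (merge j ω τ)

lemma card_fun : (Fintype.card (Fin n → Fin m) : ℝ) = (m : ℝ) ^ n := by
  simp [Fintype.card_fun]

lemma G_top (f : (Fin n → Fin m) → ℝ) (ω : Fin n → Fin m) :
    G f n ω = (m : ℝ) ^ n * f ω := by
  have : ∀ τ : Fin n → Fin m, merge n ω τ = ω := by
    intro τ; funext i; simp [merge, i.isLt]
  simp only [G, this, Finset.sum_const, Finset.card_univ, nsmul_eq_mul, Fintype.card_fun,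
    Fintype.card_fin]
  push_cast; ring

lemma G_zero (f : (Fin n → Fin m) → ℝ) (ω : Fin n → Fin m) :
    G f 0 ω = ∑ τ : Fin n → Fin m, f τ := by
  have : ∀ τ : Fin n → Fin m, merge 0 ω τ = τ := by
    intro τ; funext i; simp [merge]
  simp only [G, this]

lemma G_indep (f : (Fin n → Fin m) → ℝ) {j : ℕ} {i : Fin n} (hij : j ≤ (i : ℕ))
    (ω : Fin n → Fin m) (a : Fin m) :
    G f j (Function.update ω i a) = G f j ω := by
  unfold G
  congr 1; funext τ; congr 1
  funext i'
  simp only [merge]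
  split_ifs with h
  · rw [Function.update_of_ne]
    intro he
    rw [he] at h; omega
  · rfl

lemma G_step (f : (Fin n → Fin m) → ℝ) {j : ℕ} (hj : j < n) (ω : Fin n → Fin m) :
    ∑ a : Fin m, G f (j + 1) (Function.update ω ⟨j, hj⟩ a) = (m : ℝ) * G f j ω := by
  have key : ∀ (a : Fin m) (τ : Fin n → Fin m),
      merge (j+1) (Function.update ω ⟨j, hj⟩ a) τ = merge j ω (Function.update τ ⟨j, hj⟩ a) := by
    intro a τ; funext i
    simp only [merge]
    rcases lt_trichotomy (i : ℕ) j with h | h | h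
    · rw [if_pos (by omega), if_pos h, Function.update_of_ne (by simp [Fin.ext_iff]; omega)]
    · have hi : i = ⟨j, hj⟩ := by simp [Fin.ext_iff]; omega
      rw [if_pos (by omega), if_neg (by omega), hi, Function.update_self, Function.update_self]
    · rw [if_neg (by omega), if_neg (by omega),
        Function.update_of_ne (by simp [Fin.ext_iff]; omega)]
  calc ∑ a : Fin m, G f (j + 1) (Function.update ω ⟨j, hj⟩ a)
      = ∑ a : Fin m, ∑ τ : Fin n → Fin m, f (merge j ω (Function.update τ ⟨j, hj⟩ a)) := by
        simp only [G, key]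
    _ = ∑ τ : Fin n → Fin m, ∑ a : Fin m, f (merge j ω (Function.update τ ⟨j, hj⟩ a)) :=
        Finset.sum_comm
    _ = (m : ℝ) * G f j ω := L1 ⟨j, hj⟩ (fun τ => f (merge j ω τ))


noncomputable def D (f : (Fin n → Fin m) → ℝ) (j : ℕ) (ω : Fin n → Fin m) : ℝ :=
  G f (j + 1) ω - G f j ω

lemma telescope (f : (Fin n → Fin m) → ℝ) (ω : Fin n → Fin m) :
    ∑ j ∈ Finset.range n, D f j ω = (m : ℝ) ^ n * f ω - ∑ τ : Fin n → Fin m, f τ := by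
  rw [show (∑ j ∈ Finset.range n, D f j ω) = ∑ j ∈ Finset.range n, (G f (j+1) ω - G f j ω) from rfl,
    Finset.sum_range_sub (fun j => G f j ω), G_top, G_zero]

lemma D_indep (f : (Fin n → Fin m) → ℝ) {j : ℕ} {i : Fin n} (hij : j + 1 ≤ (i : ℕ))
    (ω : Fin n → Fin m) (a : Fin m) :
    D f j (Function.update ω i a) = D f j ω := by
  unfold D
  rw [G_indep f hij, G_indep f (by omega)]

lemma D_avg (f : (Fin n → Fin m) → ℝ) {j : ℕ} (hj : j < n) (ω : Fin n → Fin m) :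
    ∑ a : Fin m, D f j (Function.update ω ⟨j, hj⟩ a) = 0 := by
  unfold D
  rw [Finset.sum_sub_distrib, G_step f hj]
  have : ∀ a : Fin m, G f j (Function.update ω ⟨j, hj⟩ a) = G f j ω :=
    fun a => G_indep f (j := j) (i := ⟨j, hj⟩) (le_refl j) ω a
  simp [this, Finset.sum_const, Finset.card_univ]

lemma cross (f : (Fin n → Fin m) → ℝ) {j j' : ℕ} (hj' : j' < n) (hjj' : j < j') (hm : 0 < m) :
    ∑ ω : Fin n → Fin m, D f j ω * D f j' ω = 0 := by
  set i : Fin n := ⟨j', hj'⟩ with hi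
  have key := L1 i (fun ω => D f j ω * D f j' ω)
  have h2 : ∀ ω : Fin n → Fin m, ∑ a : Fin m,
      D f j (Function.update ω i a) * D f j' (Function.update ω i a) = 0 := by
    intro ω
    have : ∀ a : Fin m, D f j (Function.update ω i a) = D f j ω :=
      fun a => D_indep f (by simp [hi]; omega) ω a
    simp only [this, ← Finset.mul_sum]
    rw [D_avg f hj' ω, mul_zero]
  rw [Finset.sum_congr rfl (fun ω _ => h2 ω), Finset.sum_const] at key
  have hm' : (m : ℝ) ≠ 0 := by positivity
  simp only [smul_zero] at key
  exact (mul_eq_zero.mp key.symm).resolve_left hm'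

lemma centered_sq_sum (hm : 0 < m) {v : Fin m → ℝ} {C : ℝ} (hC : 0 ≤ C)
    (h : ∀ a b, |v a - v b| ≤ C) :
    ∑ a : Fin m, (v a - (∑ b : Fin m, v b) / m) ^ 2 ≤ ((m : ℝ) - 1) * C ^ 2 := by
  have hm' : (m : ℝ) ≠ 0 := by positivity
  have h1 : ∀ a, v a - (∑ b : Fin m, v b) / m = (∑ b : Fin m, (v a - v b)) / m := by
    intro a
    rw [Finset.sum_sub_distrib, Finset.sum_const, Finset.card_univ, Fintype.card_fin]
    field_simp
    ring
  have h2 : ∀ a : Fin m, (∑ b : Fin m, (v a - v b)) ^ 2 ≤ (m : ℝ) * ∑ b : Fin m, (v a - v b) ^ 2 := by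
    intro a
    have := sq_sum_le_card_mul_sum_sq (s := (Finset.univ : Finset (Fin m)))
      (f := fun b => v a - v b)
    simpa using this
  have h3 : ∀ a : Fin m, ∑ b : Fin m, (v a - v b) ^ 2 ≤ ((m : ℝ) - 1) * C ^ 2 := by
    intro a
    have hb : ∀ b : Fin m, (v a - v b) ^ 2 ≤ (if a = b then 0 else C ^ 2) := by
      intro b
      split_ifs with hab
      · simp [hab]
      · have := h a b
        calc (v a - v b) ^ 2 = |v a - v b| ^ 2 := (sq_abs _).symm
          _ ≤ C ^ 2 := pow_le_pow_left₀ (abs_nonneg _) this 2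
    calc ∑ b : Fin m, (v a - v b) ^ 2 ≤ ∑ b : Fin m, (if a = b then 0 else C ^ 2) :=
          Finset.sum_le_sum (fun b _ => hb b)
      _ = ∑ b : Fin m, (C ^ 2 - if a = b then C ^ 2 else 0) := by
          apply Finset.sum_congr rfl; intro b _; split_ifs <;> ring
      _ = (m : ℝ) * C ^ 2 - C ^ 2 := by
          rw [Finset.sum_sub_distrib, Finset.sum_const, Finset.sum_ite_eq]
          simp
      _ = ((m : ℝ) - 1) * C ^ 2 := by ring
  calc ∑ a : Fin m, (v a - (∑ b : Fin m, v b) / m) ^ 2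
      = ∑ a : Fin m, ((∑ b : Fin m, (v a - v b)) / m) ^ 2 := by simp only [h1]
    _ = ∑ a : Fin m, (∑ b : Fin m, (v a - v b)) ^ 2 / (m:ℝ) ^ 2 := by
        apply Finset.sum_congr rfl; intro a _; rw [div_pow]
    _ ≤ ∑ a : Fin m, ((m : ℝ) * (((m : ℝ) - 1) * C ^ 2)) / (m:ℝ) ^ 2 := by
        apply Finset.sum_le_sum; intro a _
        apply div_le_div_of_nonneg_right ?_ (by positivity)
        calc (∑ b : Fin m, (v a - v b)) ^ 2 ≤ (m : ℝ) * ∑ b : Fin m, (v a - v b) ^ 2 := h2 a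
          _ ≤ (m : ℝ) * (((m : ℝ) - 1) * C ^ 2) := by
              apply mul_le_mul_of_nonneg_left (h3 a) (by positivity)
    _ = ((m : ℝ) - 1) * C ^ 2 := by
        rw [Finset.sum_const, Finset.card_univ, Fintype.card_fin, nsmul_eq_mul]
        field_simp


lemma diag (f : (Fin n → Fin m) → ℝ) (hm : 0 < m)
    (hlip : ∀ (σ : Fin n → Fin m) (i : Fin n) (b : Fin m),
      |f σ - f (Function.update σ i b)| ≤ 1)
    {j : ℕ} (hj : j < n) :
    ∑ ω : Fin n → Fin m, (D f j ω) ^ 2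
      ≤ (m : ℝ) ^ n * (((m : ℝ) - 1) * ((m : ℝ) ^ n) ^ 2) / m := by
  have hm' : (0:ℝ) < m := by positivity
  have key := L1 ⟨j, hj⟩ (fun ω => (D f j ω) ^ 2)
  have inner : ∀ ω : Fin n → Fin m,
      ∑ a : Fin m, (D f j (Function.update ω ⟨j, hj⟩ a)) ^ 2
        ≤ ((m : ℝ) - 1) * ((m : ℝ) ^ n) ^ 2 := by
    intro ω
    set v : Fin m → ℝ := fun a => G f (j + 1) (Function.update ω ⟨j, hj⟩ a) with hv
    have hDv : ∀ a : Fin m, D f j (Function.update ω ⟨j, hj⟩ a)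
        = v a - (∑ b : Fin m, v b) / m := by
      intro a
      have h1 : G f j (Function.update ω ⟨j, hj⟩ a) = G f j ω :=
        G_indep f (j := j) (i := ⟨j, hj⟩) (le_refl j) ω a
      have h2 : (∑ b : Fin m, v b) = (m : ℝ) * G f j ω := G_step f hj ω
      unfold D
      rw [h1, h2]
      field_simp
      rfl
    have hvC : ∀ a b : Fin m, |v a - v b| ≤ (m : ℝ) ^ n := by
      intro a b
      have harg : ∀ τ : Fin n → Fin m,
          merge (j+1) (Function.update ω ⟨j, hj⟩ b) τ
            = Function.update (merge (j+1) (Function.update ω ⟨j, hj⟩ a) τ) ⟨j, hj⟩ b := by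
        intro τ; funext i
        rcases eq_or_ne i (⟨j, hj⟩ : Fin n) with hi | hi
        · subst hi
          simp [merge, Function.update_self]
        · rw [Function.update_of_ne hi]
          have hij : (i : ℕ) ≠ j := fun he => hi (by simp [Fin.ext_iff, he])
          simp only [merge]
          split_ifs with h
          · rw [Function.update_of_ne (by simp [Fin.ext_iff]; omega),
              Function.update_of_ne (by simp [Fin.ext_iff]; omega)]
          · rfl
      have : v a - v b = ∑ τ : Fin n → Fin m,
          (f (merge (j+1) (Function.update ω ⟨j, hj⟩ a) τ)
            - f (Function.update (merge (j+1) (Function.update ω ⟨j, hj⟩ a) τ) ⟨j, hj⟩ b)) := by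
        rw [Finset.sum_sub_distrib]
        simp only [hv, G]
        congr 1
        exact Finset.sum_congr rfl fun τ _ => by rw [harg τ]
      rw [this]
      calc |∑ τ : Fin n → Fin m, _| ≤ ∑ τ : Fin n → Fin m,
            |f (merge (j+1) (Function.update ω ⟨j, hj⟩ a) τ)
            - f (Function.update (merge (j+1) (Function.update ω ⟨j, hj⟩ a) τ) ⟨j, hj⟩ b)| :=
          Finset.abs_sum_le_sum_abs _ _
        _ ≤ ∑ τ : Fin n → Fin m, 1 := Finset.sum_le_sum fun τ _ => hlip _ _ _
        _ = (m : ℝ) ^ n := by simp [Finset.card_univ, Fintype.card_fun]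
    simp only [hDv]
    exact centered_sq_sum hm (by positivity) hvC
  have sum_le : ∑ ω : Fin n → Fin m, ∑ a : Fin m, (D f j (Function.update ω ⟨j, hj⟩ a)) ^ 2
      ≤ (m : ℝ) ^ n * (((m : ℝ) - 1) * ((m : ℝ) ^ n) ^ 2) := by
    calc _ ≤ ∑ _ω : Fin n → Fin m, ((m : ℝ) - 1) * ((m : ℝ) ^ n) ^ 2 :=
          Finset.sum_le_sum fun ω _ => inner ω
      _ = (m : ℝ) ^ n * (((m : ℝ) - 1) * ((m : ℝ) ^ n) ^ 2) := by
          rw [Finset.sum_const, Finset.card_univ, Fintype.card_fun]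
          simp [nsmul_eq_mul]
  rw [key] at sum_le
  exact (le_div_iff₀' hm').mpr sum_le

lemma var_le (f : (Fin n → Fin m) → ℝ) (hm : 0 < m)
    (hlip : ∀ (σ : Fin n → Fin m) (i : Fin n) (b : Fin m),
      |f σ - f (Function.update σ i b)| ≤ 1) :
    variance' n m f ≤ (n : ℝ) * ((m : ℝ) - 1) / m := by
  have hm' : (0:ℝ) < m := by positivity
  have hN : (0:ℝ) < (m : ℝ) ^ n := by positivity
  have hdev : ∀ ω : Fin n → Fin m,
      f ω - expec n m f = (∑ j ∈ Finset.range n, D f j ω) / (m : ℝ) ^ n := by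
    intro ω
    rw [telescope f ω]
    unfold expec
    rw [card_fun]
    field_simp
  have hexp : ∀ g : (Fin n → Fin m) → ℝ, expec n m g = (∑ ω : Fin n → Fin m, g ω) / (m:ℝ)^n := by
    intro g; unfold expec; rw [card_fun]
  have hvar : variance' n m f
      = (∑ ω : Fin n → Fin m, (∑ j ∈ Finset.range n, D f j ω) ^ 2) / ((m : ℝ) ^ n) ^ 3 := by
    rw [show variance' n m f = expec n m (fun ω => (f ω - expec n m f) ^ 2) from rfl, hexp]
    simp only [hdev, div_pow]
    rw [← Finset.sum_div, div_div]
    congr 1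
  have expand : ∑ ω : Fin n → Fin m, (∑ j ∈ Finset.range n, D f j ω) ^ 2
      = ∑ j ∈ Finset.range n, ∑ j' ∈ Finset.range n,
          ∑ ω : Fin n → Fin m, D f j ω * D f j' ω := by
    simp_rw [sq, Finset.sum_mul_sum]
    rw [Finset.sum_comm]
    exact Finset.sum_congr rfl fun j _ => Finset.sum_comm
  have offdiag : ∀ j ∈ Finset.range n, ∀ j' ∈ Finset.range n, j ≠ j' →
      ∑ ω : Fin n → Fin m, D f j ω * D f j' ω = 0 := by
    intro j hj j' hj' hne
    rcases hne.lt_or_gt with h | h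
    · exact cross f (Finset.mem_range.mp hj') h hm
    · rw [Finset.sum_congr rfl fun ω _ => mul_comm _ _]
      exact cross f (Finset.mem_range.mp hj) h hm
  have diag_sum : ∑ ω : Fin n → Fin m, (∑ j ∈ Finset.range n, D f j ω) ^ 2
      = ∑ j ∈ Finset.range n, ∑ ω : Fin n → Fin m, (D f j ω) ^ 2 := by
    rw [expand]
    apply Finset.sum_congr rfl
    intro j hj
    rw [Finset.sum_eq_single j (fun j' hj' hne => offdiag j hj j' hj' (Ne.symm hne))
      (fun h => absurd hj h)]
    exact Finset.sum_congr rfl fun ω _ => (sq (D f j ω)).symm ▸ rfl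
  have bound : ∑ ω : Fin n → Fin m, (∑ j ∈ Finset.range n, D f j ω) ^ 2
      ≤ (n : ℝ) * ((m : ℝ) ^ n * (((m : ℝ) - 1) * ((m : ℝ) ^ n) ^ 2) / m) := by
    rw [diag_sum]
    calc ∑ j ∈ Finset.range n, ∑ ω : Fin n → Fin m, (D f j ω) ^ 2
        ≤ ∑ j ∈ Finset.range n, (m : ℝ) ^ n * (((m : ℝ) - 1) * ((m : ℝ) ^ n) ^ 2) / m :=
          Finset.sum_le_sum fun j hj => diag f hm hlip (Finset.mem_range.mp hj)
      _ = (n : ℝ) * ((m : ℝ) ^ n * (((m : ℝ) - 1) * ((m : ℝ) ^ n) ^ 2) / m) := by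
          rw [Finset.sum_const, Finset.card_range, nsmul_eq_mul]
  rw [hvar]
  rw [div_le_iff₀ (by positivity)]
  calc ∑ ω : Fin n → Fin m, (∑ j ∈ Finset.range n, D f j ω) ^ 2
      ≤ (n : ℝ) * ((m : ℝ) ^ n * (((m : ℝ) - 1) * ((m : ℝ) ^ n) ^ 2) / m) := bound
    _ = (n : ℝ) * ((m : ℝ) - 1) / m * ((m : ℝ) ^ n) ^ 3 := by field_simp


lemma max_shift (x : ℝ) : 0 ≤ max (x + 1) 0 - max x 0 ∧ max (x + 1) 0 - max x 0 ≤ 1 := by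
  rcases le_total x (-1) with h | h
  · rw [max_eq_right (by linarith), max_eq_right (by linarith)]; norm_num
  · rcases le_total x 0 with h2 | h2
    · rw [max_eq_left (by linarith), max_eq_right h2]
      constructor <;> linarith
    · rw [max_eq_left (by linarith), max_eq_left h2]; norm_num

lemma binCount_real (i : Fin m) (ω : Fin n → Fin m) :
    (binCount n m i ω : ℝ) = ∑ j : Fin n, (if ω j = i then (1 : ℝ) else 0) := by
  unfold binCount
  rw [Finset.card_filter]
  push_cast
  rfl

lemma binCount_update (σ : Fin n → Fin m) (i : Fin n) (b : Fin m) (q : Fin m) :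
    (binCount n m q (Function.update σ i b) : ℝ)
      = (binCount n m q σ : ℝ) + (if b = q then 1 else 0) - (if σ i = q then 1 else 0) := by
  rw [binCount_real, binCount_real]
  have hterm : ∀ j : Fin n, (if Function.update σ i b j = q then (1:ℝ) else 0)
      = (if σ j = q then (1:ℝ) else 0)
        + (if j = i then ((if b = q then (1:ℝ) else 0) - (if σ i = q then 1 else 0)) else 0) := by
    intro j
    rcases eq_or_ne j i with rfl | hj
    · rw [Function.update_self, if_pos rfl]; ring
    · rw [Function.update_of_ne hj, if_neg hj]; ring
  rw [Finset.sum_congr rfl fun j _ => hterm j, Finset.sum_add_distrib,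
    Finset.sum_ite_eq' Finset.univ i
      (fun _ => ((if b = q then (1:ℝ) else 0) - (if σ i = q then 1 else 0)))]
  simp only [Finset.mem_univ, if_true]
  ring

lemma lip_overflow (k : ℕ) (σ : Fin n → Fin m) (i : Fin n) (b : Fin m) :
    |overflowX n m k σ - overflowX n m k (Function.update σ i b)| ≤ 1 := by
  rcases eq_or_ne b (σ i) with rfl | hb
  · rw [Function.update_eq_self]; simp
  have hbc : b ≠ σ i := hb
  set t : Fin m → ℝ := fun q =>
    max ((binCount n m q (Function.update σ i b) : ℝ) - k) 0
      - max ((binCount n m q σ : ℝ) - k) 0 with ht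
  have hX : overflowX n m k (Function.update σ i b) - overflowX n m k σ = ∑ q : Fin m, t q := by
    unfold overflowX
    rw [← Finset.sum_sub_distrib]
  have ht0 : ∀ q : Fin m, q ∉ ({b, σ i} : Finset (Fin m)) → t q = 0 := by
    intro q hq
    simp only [Finset.mem_insert, Finset.mem_singleton, not_or] at hq
    have : (binCount n m q (Function.update σ i b) : ℝ) = (binCount n m q σ : ℝ) := by
      rw [binCount_update, if_neg (fun h => hq.1 h.symm), if_neg (fun h => hq.2 h.symm)]
      ring
    simp [ht, this]
  have hsum : ∑ q : Fin m, t q = t b + t (σ i) := by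
    rw [← Finset.sum_subset (Finset.subset_univ ({b, σ i} : Finset (Fin m)))
      (fun q _ hq => ht0 q hq)]
    exact Finset.sum_pair hbc
  have htb : 0 ≤ t b ∧ t b ≤ 1 := by
    have hup : (binCount n m b (Function.update σ i b) : ℝ) = (binCount n m b σ : ℝ) + 1 := by
      rw [binCount_update, if_pos rfl, if_neg (fun h => hbc h.symm)]; ring
    have hx : t b = max (((binCount n m b σ : ℝ) - k) + 1) 0
        - max ((binCount n m b σ : ℝ) - k) 0 := by
      simp only [ht]
      rw [hup, show (binCount n m b σ : ℝ) + 1 - k = ((binCount n m b σ : ℝ) - k) + 1 from by ring]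
    rw [hx]
    exact max_shift _
  have htc : -1 ≤ t (σ i) ∧ t (σ i) ≤ 0 := by
    have hup : (binCount n m (σ i) (Function.update σ i b) : ℝ)
        = (binCount n m (σ i) σ : ℝ) - 1 := by
      rw [binCount_update, if_neg hbc, if_pos rfl]; ring
    have hx : t (σ i) = -(max (((binCount n m (σ i) σ : ℝ) - 1 - k) + 1) 0
        - max ((binCount n m (σ i) σ : ℝ) - 1 - k) 0) := by
      simp only [ht]
      rw [hup, show (binCount n m (σ i) σ : ℝ) - 1 - k + 1 = (binCount n m (σ i) σ : ℝ) - k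
        from by ring]
      ring
    have := max_shift ((binCount n m (σ i) σ : ℝ) - 1 - k)
    constructor
    · rw [hx]; linarith [this.2]
    · rw [hx]; linarith [this.1]
  rw [abs_sub_comm, hX, hsum]
  rw [abs_le]
  constructor
  · linarith [htb.1, htc.1]
  · linarith [htb.2, htc.2]


lemma sum_ind (hm : 0 < m) (j : Fin n) (z : Fin m) :
    ∑ ω : Fin n → Fin m, (if ω j = z then (1:ℝ) else 0) = (m:ℝ)^n / m := by
  have hm' : (m:ℝ) ≠ 0 := by positivity
  have key := L1 j (fun ω => if ω j = z then (1:ℝ) else 0)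
  simp only [Function.update_self] at key
  have hone : ∀ ω : Fin n → Fin m, ∑ a : Fin m, (if a = z then (1:ℝ) else 0) = 1 := by
    intro ω; simp
  rw [Finset.sum_congr rfl fun ω _ => hone ω, Finset.sum_const, Finset.card_univ,
    Fintype.card_fun, Fintype.card_fin, Fintype.card_fin] at key
  simp only [nsmul_eq_mul, mul_one] at key
  push_cast at key
  have : (m:ℝ)^n = (m:ℝ) * ((m:ℝ)^n / m) := by field_simp
  rw [this] at key
  exact mul_left_cancel₀ hm' key.symm

lemma sum_ind_pair (hm : 0 < m) (j j' : Fin n) (hjj : j ≠ j') (z : Fin m) :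
    ∑ ω : Fin n → Fin m, (if ω j = z then (1:ℝ) else 0) * (if ω j' = z then (1:ℝ) else 0)
      = (m:ℝ)^n / m^2 := by
  have hm' : (m:ℝ) ≠ 0 := by positivity
  have key := L1 j (fun ω => (if ω j = z then (1:ℝ) else 0) * (if ω j' = z then (1:ℝ) else 0))
  have hrw : ∀ (ω : Fin n → Fin m) (a : Fin m),
      (if Function.update ω j a j = z then (1:ℝ) else 0)
        * (if Function.update ω j a j' = z then (1:ℝ) else 0)
      = (if a = z then (1:ℝ) else 0) * (if ω j' = z then (1:ℝ) else 0) := by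
    intro ω a
    rw [Function.update_self, Function.update_of_ne (Ne.symm hjj)]
  simp only [hrw] at key
  have hone : ∀ ω : Fin n → Fin m,
      ∑ a : Fin m, (if a = z then (1:ℝ) else 0) * (if ω j' = z then (1:ℝ) else 0)
        = (if ω j' = z then (1:ℝ) else 0) := by
    intro ω
    rw [← Finset.sum_mul]
    simp
  rw [Finset.sum_congr rfl fun ω _ => hone ω, sum_ind hm j' z] at key
  have : (m:ℝ)^n / m = (m:ℝ) * ((m:ℝ)^n / m^2) := by field_simp
  rw [this] at key
  exact mul_left_cancel₀ hm' key.symm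

lemma expec_binCount (hm : 0 < m) (hn1 : 0 < n) (z : Fin m) :
    expec n m (fun ω => (binCount n m z ω : ℝ)) = (n:ℝ) / m := by
  have hm' : (m:ℝ) ≠ 0 := by positivity
  unfold expec
  rw [card_fun]
  have : ∑ ω : Fin n → Fin m, (binCount n m z ω : ℝ) = (n:ℝ) * ((m:ℝ)^n / m) := by
    calc ∑ ω : Fin n → Fin m, (binCount n m z ω : ℝ)
        = ∑ ω : Fin n → Fin m, ∑ j : Fin n, (if ω j = z then (1:ℝ) else 0) := by
          exact Finset.sum_congr rfl fun ω _ => binCount_real z ω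
      _ = ∑ j : Fin n, ∑ ω : Fin n → Fin m, (if ω j = z then (1:ℝ) else 0) := Finset.sum_comm
      _ = ∑ _j : Fin n, (m:ℝ)^n / m := Finset.sum_congr rfl fun j _ => sum_ind hm j z
      _ = (n:ℝ) * ((m:ℝ)^n / m) := by
          rw [Finset.sum_const, Finset.card_univ, Fintype.card_fin, nsmul_eq_mul]
  rw [this]
  have hNn : ((m:ℝ)^n) ≠ 0 := by positivity
  field_simp

lemma expec_binCount_sq (hm : 0 < m) (hn1 : 0 < n) (z : Fin m) :
    expec n m (fun ω => (binCount n m z ω : ℝ)^2)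
      = (n:ℝ) / m + (n:ℝ) * ((n:ℝ) - 1) / m^2 := by
  have hm' : (m:ℝ) ≠ 0 := by positivity
  have hdiag : ∀ j : Fin n, ∑ ω : Fin n → Fin m,
      (if ω j = z then (1:ℝ) else 0) * (if ω j = z then (1:ℝ) else 0) = (m:ℝ)^n / m := by
    intro j
    have : ∀ ω : Fin n → Fin m, (if ω j = z then (1:ℝ) else 0) * (if ω j = z then (1:ℝ) else 0)
        = (if ω j = z then (1:ℝ) else 0) := by
      intro ω; split_ifs <;> norm_num
    rw [Finset.sum_congr rfl fun ω _ => this ω]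
    exact sum_ind hm j z
  have hinner : ∀ j : Fin n, ∑ j' : Fin n, ∑ ω : Fin n → Fin m,
      (if ω j = z then (1:ℝ) else 0) * (if ω j' = z then (1:ℝ) else 0)
      = (m:ℝ)^n / m + ((n:ℝ) - 1) * ((m:ℝ)^n / m^2) := by
    intro j
    rw [← Finset.sum_erase_add _ _ (Finset.mem_univ j), hdiag j,
      Finset.sum_congr rfl fun j' hj' =>
        sum_ind_pair hm j j' (Ne.symm (Finset.ne_of_mem_erase hj')) z,
      Finset.sum_const, Finset.card_erase_of_mem (Finset.mem_univ j), Finset.card_univ,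
      Fintype.card_fin, nsmul_eq_mul, Nat.cast_sub hn1]
    push_cast
    ring
  unfold expec
  rw [card_fun]
  have hsum : ∑ ω : Fin n → Fin m, (binCount n m z ω : ℝ)^2
      = (n:ℝ) * ((m:ℝ)^n / m + ((n:ℝ) - 1) * ((m:ℝ)^n / m^2)) := by
    calc ∑ ω : Fin n → Fin m, (binCount n m z ω : ℝ)^2
        = ∑ ω : Fin n → Fin m, ∑ j : Fin n, ∑ j' : Fin n,
            (if ω j = z then (1:ℝ) else 0) * (if ω j' = z then (1:ℝ) else 0) := by
          apply Finset.sum_congr rfl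
          intro ω _
          rw [binCount_real, sq, Finset.sum_mul_sum]
      _ = ∑ j : Fin n, ∑ ω : Fin n → Fin m, ∑ j' : Fin n,
            (if ω j = z then (1:ℝ) else 0) * (if ω j' = z then (1:ℝ) else 0) := Finset.sum_comm
      _ = ∑ j : Fin n, ∑ j' : Fin n, ∑ ω : Fin n → Fin m,
            (if ω j = z then (1:ℝ) else 0) * (if ω j' = z then (1:ℝ) else 0) :=
          Finset.sum_congr rfl fun j _ => Finset.sum_comm
      _ = ∑ _j : Fin n, ((m:ℝ)^n / m + ((n:ℝ) - 1) * ((m:ℝ)^n / m^2)) :=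
          Finset.sum_congr rfl fun j _ => hinner j
      _ = (n:ℝ) * ((m:ℝ)^n / m + ((n:ℝ) - 1) * ((m:ℝ)^n / m^2)) := by
          rw [Finset.sum_const, Finset.card_univ, Fintype.card_fin, nsmul_eq_mul]
  rw [hsum]
  have hNn : ((m:ℝ)^n) ≠ 0 := by positivity
  field_simp

lemma var_eq (hm : 0 < m) (g : (Fin n → Fin m) → ℝ) :
    variance' n m g = expec n m (fun ω => g ω ^ 2) - (expec n m g)^2 := by
  have hm' : (m:ℝ) ≠ 0 := by positivity
  have hNn : ((m:ℝ)^n) ≠ 0 := by positivity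
  have hexp : ∀ h : (Fin n → Fin m) → ℝ, expec n m h = (∑ ω : Fin n → Fin m, h ω) / (m:ℝ)^n := by
    intro h; unfold expec; rw [card_fun]
  set c := expec n m g with hc
  have hcv : c = (∑ ω : Fin n → Fin m, g ω) / (m:ℝ)^n := by rw [hc, hexp]
  rw [show variance' n m g = expec n m (fun ω => (g ω - c) ^ 2) from rfl, hexp, hexp]
  have e1 : ∑ ω : Fin n → Fin m, (g ω - c)^2
      = ∑ ω : Fin n → Fin m, (g ω)^2 - (2*c) * ∑ ω : Fin n → Fin m, g ω + (m:ℝ)^n * c^2 := by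
    have hpt : ∀ ω : Fin n → Fin m, (g ω - c)^2 = (g ω)^2 - (2*c) * g ω + c^2 := by
      intro ω; ring
    rw [Finset.sum_congr rfl fun ω _ => hpt ω, Finset.sum_add_distrib, Finset.sum_sub_distrib,
      ← Finset.mul_sum, Finset.sum_const, Finset.card_univ, Fintype.card_fun, Fintype.card_fin,
      Fintype.card_fin, nsmul_eq_mul]
    push_cast
    ring
  rw [e1, hcv]
  field_simp
  ring

end VarSpare

/-- Throwing `n = k·m` balls uniformly into `m` bins,
with `p = 1/m`, the overflow `X = ∑ᵢ max(Bᵢ − k, 0)` satisfies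
`Var(X) ≤ m·Var(B₁) = n(1−p)`. -/
theorem variance_spare_size (n m k : ℕ) (hk : 1 ≤ k) (hm : 2 ≤ m)
    (hn : n = k * m) (p : ℝ) (hp : p = 1 / (m : ℝ)) :
    variance' n m (overflowX n m k)
      ≤ (m : ℝ) * variance' n m (fun ω => (binCount n m (⟨0, by omega⟩ : Fin m) ω : ℝ)) ∧
    (m : ℝ) * variance' n m (fun ω => (binCount n m (⟨0, by omega⟩ : Fin m) ω : ℝ))
      = (n : ℝ) * (1 - p) := by
  have hm0 : 0 < m := by omega
  have hm' : (m:ℝ) ≠ 0 := by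
    have : (0:ℝ) < m := by exact_mod_cast hm0
    exact ne_of_gt this
  have hn1 : 0 < n := by
    rw [hn]; exact Nat.mul_pos (by omega) hm0
  have h2 : (m : ℝ) * variance' n m (fun ω => (binCount n m (⟨0, by omega⟩ : Fin m) ω : ℝ))
      = (n : ℝ) * (1 - p) := by
    rw [VarSpare.var_eq hm0, VarSpare.expec_binCount hm0 hn1,
      VarSpare.expec_binCount_sq hm0 hn1, hp]
    field_simp
    ring
  refine ⟨?_, h2⟩
  have hv := VarSpare.var_le (overflowX n m k) hm0
    (fun σ i b => VarSpare.lip_overflow k σ i b)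
  calc variance' n m (overflowX n m k) ≤ (n:ℝ) * ((m:ℝ) - 1) / m := hv
    _ = (n:ℝ) * (1 - p) := by rw [hp]; field_simp
    _ = _ := h2.symm
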